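/- The number of partitions of n having diagonal lengths equal to the single-block Hilbert function T = (1,2,...,d,t,0) (with 0 < t ≤ d) is binom(s+t, t), where s = d+1-t. -/

import Mathlib

/-- The diagonal lengths of a partition given by its (antitone) sequence of parts
`f 0 ≥ f 1 ≥ ⋯` : `diagLen f i = #{u | 1 ≤ u ≤ i+1 ∧ i+2-u ≤ p_u}`, with `p_u = f (u-1)`. -/
def diagLen (f : ℕ → ℕ) (i : ℕ) : ℕ :=
  ((Finset.range (i + 1)).filter fun b => i + 1 - b ≤ f b).card

private def invF (d : ℕ) (S : Finset ℕ) : ℕ → ℕ :=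
  fun b => if b ∈ S then d + 1 - b else d - b

private lemma filter_invF (d : ℕ) (S : Finset ℕ) (hS : S ⊆ Finset.range (d + 1)) :
    ((Finset.range (d + 1)).filter fun b => d + 1 - b ≤ invF d S b) = S := by
  ext b
  simp only [Finset.mem_filter, Finset.mem_range]
  simp only [invF]
  constructor
  · rintro ⟨hb, hle⟩
    by_contra hbS
    rw [if_neg hbS] at hle
    omega
  · intro hbS
    have := Finset.mem_range.mp (hS hbS)
    rw [if_pos hbS]
    omega

/-- The number of partitions having diagonal lengths the single-block Hilbert function
`T = (1,2,…,d,t,0)` (with `0 < t ≤ d`) is `(s+t).choose t` where `s = d+1-t`. -/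
theorem numPartitions_singleBlock_diagonal_lengths (d t : ℕ) (ht : 0 < t) (htd : t ≤ d) :
    Nat.card {f : ℕ → ℕ // Antitone f ∧
        ∀ i, diagLen f i = if i < d then i + 1 else if i = d then t else 0} =
      Nat.choose ((d + 1 - t) + t) t := by
  have hd : 1 ≤ d := ht.trans_le htd
  have key : ∀ f : ℕ → ℕ, Antitone f →
      (∀ i, diagLen f i = if i < d then i + 1 else if i = d then t else 0) →
      (∀ b, f b ≤ d + 1 - b) ∧ (∀ b, b < d → d - b ≤ f b) := by
    intro f hA hD
    constructor
    · have h1 := hD (d + 1)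
      rw [if_neg (by omega), if_neg (by omega)] at h1
      unfold diagLen at h1
      rw [Finset.card_eq_zero, Finset.filter_eq_empty_iff] at h1
      intro b
      by_cases hb : b < d + 2
      · have := h1 (Finset.mem_range.mpr hb)
        omega
      · have h2 : f b ≤ f (d + 1) := hA (by omega)
        have h3 := h1 (Finset.mem_range.mpr (by omega : d + 1 < d + 1 + 1))
        omega
    · intro b hb
      have h1 := hD (d - 1)
      rw [if_pos (by omega)] at h1
      unfold diagLen at h1
      have heq : ((Finset.range (d - 1 + 1)).filter fun b => d - 1 + 1 - b ≤ f b) =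
          Finset.range (d - 1 + 1) :=
        Finset.eq_of_subset_of_card_le (Finset.filter_subset _ _)
          (by rw [h1, Finset.card_range])
      have hbmem : b ∈ Finset.range (d - 1 + 1) := Finset.mem_range.mpr (by omega)
      rw [← heq, Finset.mem_filter] at hbmem
      omega
  have e : {f : ℕ → ℕ // Antitone f ∧
        ∀ i, diagLen f i = if i < d then i + 1 else if i = d then t else 0} ≃
      {S : Finset ℕ // S ∈ Finset.powersetCard t (Finset.range (d + 1))} :=
  { toFun := fun x => ⟨(Finset.range (d + 1)).filter fun b => d + 1 - b ≤ x.1 b, by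
      obtain ⟨f, hA, hD⟩ := x
      rw [Finset.mem_powersetCard]
      refine ⟨Finset.filter_subset _ _, ?_⟩
      have h := hD d
      rw [if_neg (lt_irrefl d), if_pos rfl] at h
      exact h⟩
    invFun := fun S => ⟨invF d S.1, by
      have hS := Finset.mem_powersetCard.mp S.2
      apply antitone_nat_of_succ_le
      intro b
      simp only [invF]
      split_ifs <;> omega, by
      have hS := Finset.mem_powersetCard.mp S.2
      intro i
      unfold diagLen
      rcases lt_trichotomy i d with hid | rfl | hid
      · rw [if_pos hid, Finset.filter_eq_self.mpr, Finset.card_range]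
        intro b hb
        rw [Finset.mem_range] at hb
        simp only [invF]
        split_ifs <;> omega
      · rw [if_neg (lt_irrefl i), if_pos rfl, filter_invF i S.1 hS.1, hS.2]
      · rw [if_neg (by omega), if_neg (by omega), Finset.card_eq_zero,
          Finset.filter_eq_empty_iff]
        intro b hb
        rw [Finset.mem_range] at hb
        simp only [invF]
        split_ifs with h
        · have := Finset.mem_range.mp (hS.1 h)
          omega
        · omega⟩
    left_inv := fun x => by
      obtain ⟨f, hA, hD⟩ := x
      obtain ⟨hub, hlb⟩ := key f hA hD
      apply Subtype.ext
      funext b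
      by_cases hmem : b ∈ (Finset.range (d + 1)).filter fun c => d + 1 - c ≤ f c
      · simp only [invF, if_pos hmem]
        simp only [Finset.mem_filter, Finset.mem_range] at hmem
        have := hub b
        omega
      · simp only [invF, if_neg hmem]
        simp only [Finset.mem_filter, Finset.mem_range, not_and, not_le] at hmem
        have h1 := hub b
        by_cases hb : b < d + 1
        · have h2 := hmem hb
          by_cases hb2 : b < d
          · have := hlb b hb2
            omega
          · omega
        · omega
    right_inv := fun S => Subtype.ext (filter_invF d S.1 (Finset.mem_powersetCard.mp S.2).1) }
  rw [Nat.card_congr e, Nat.card_eq_fintype_card, Fintype.card_coe,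
    Finset.card_powersetCard, Finset.card_range]
  congr 1
  omega
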